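/- (Pieri-type formula) Let a = (a_k) with a_1 = 0 and let μ be a strict partition. Then P_{μ;a} · (p_1 − ∑_{j=1}^{ℓ(μ)} a_{μ_j+1}) = ∑_{λ: μ↗λ} P_{λ;a}, where p_1 = ∑_i x_i and the sum is over strict partitions λ with |λ| = |μ|+1 and μ ⊂ λ. -/

import Mathlib

noncomputable section

abbrev K (n : ℕ) : Type := FractionRing (MvPolynomial (Fin n) ℂ)

def Xv {n : ℕ} (i : Fin n) : K n :=
  algebraMap (MvPolynomial (Fin n) ℂ) (K n) (MvPolynomial.X i)

def Cv {n : ℕ} (c : ℂ) : K n :=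
  algebraMap (MvPolynomial (Fin n) ℂ) (K n) (MvPolynomial.C c)

/-- The product over pairs `i < j` with `i < l` of `(x i + x j)/(x i - x j)`. -/
def ratioProd {n : ℕ} (l : ℕ) (x : Fin n → K n) : K n :=
  ∏ p ∈ Finset.univ.filter (fun p : Fin n × Fin n => (p.1 : ℕ) < l ∧ p.1 < p.2),
    (x p.1 + x p.2) / (x p.1 - x p.2)

open Finset Polynomial Equiv

-- basic facts
lemma Xv_injective {n : ℕ} : Function.Injective (Xv (n := n)) := by
  intro i j h
  have h2 := IsFractionRing.injective (MvPolynomial (Fin n) ℂ) (K n) h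
  exact MvPolynomial.X_injective h2

lemma Cv_zero {n : ℕ} : Cv (n := n) 0 = 0 := by simp [Cv]

lemma Cv_sum {n : ℕ} {ι : Type*} (s : Finset ι) (f : ι → ℂ) :
    Cv (n := n) (∑ i ∈ s, f i) = ∑ i ∈ s, Cv (f i) := by simp [Cv]

lemma Cv_mul {n : ℕ} (c d : ℂ) : Cv (n := n) (c * d) = Cv c * Cv d := by simp [Cv]

lemma Cv_natCast {n : ℕ} (m : ℕ) : Cv (n := n) (m : ℂ) = (m : K n) := by
  simp [Cv]

-- value of a swap of explicit elements
lemma swap_val {n : ℕ} (u v z : Fin n) :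
    ((Equiv.swap u v z : Fin n) : ℕ)
      = if (z : ℕ) = (u : ℕ) then (v : ℕ) else if (z : ℕ) = (v : ℕ) then (u : ℕ) else (z : ℕ) := by
  rw [Equiv.swap_apply_def]
  by_cases h1 : (z : ℕ) = (u : ℕ)
  · rw [if_pos (Fin.ext h1), if_pos h1]
  · rw [if_neg (fun h => h1 (by rw [h])), if_neg h1]
    by_cases h2 : (z : ℕ) = (v : ℕ)
    · rw [if_pos (Fin.ext h2), if_pos h2]
    · rw [if_neg (fun h => h2 (by rw [h])), if_neg h2]

-- (a) ratioProd is invariant under permutations fixing the first l positions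
lemma ratioProd_comp_fix {n l : ℕ} (x : Fin n → K n) (τ : Equiv.Perm (Fin n))
    (hτ : ∀ i : Fin n, (i : ℕ) < l → τ i = i) :
    ratioProd l (fun j => x (τ j)) = ratioProd l x := by
  have htail : ∀ j : Fin n, l ≤ (j : ℕ) → l ≤ ((τ j : Fin n) : ℕ) := by
    intro j hj
    by_contra hc
    push_neg at hc
    have h1 : τ (τ j) = τ j := hτ (τ j) hc
    have := τ.injective h1
    rw [this] at hc
    omega
  have htail' : ∀ j : Fin n, l ≤ (j : ℕ) → l ≤ ((τ⁻¹ j : Fin n) : ℕ) := by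
    intro j hj
    by_contra hc
    push_neg at hc
    have h1 : τ (τ⁻¹ j) = τ⁻¹ j := hτ _ hc
    have h2 : j = τ⁻¹ j := (Equiv.apply_symm_apply τ j).symm.trans h1
    rw [← h2] at hc
    omega
  unfold ratioProd
  refine Finset.prod_nbij' (fun p => (p.1, τ p.2)) (fun p => (p.1, τ⁻¹ p.2)) ?_ ?_ ?_ ?_ ?_
  · intro p hp
    simp only [Finset.mem_filter, Finset.mem_univ, true_and, Fin.lt_def] at hp ⊢
    refine ⟨hp.1, ?_⟩
    rcases lt_or_ge (p.2 : ℕ) l with h2 | h2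
    · rw [hτ p.2 h2]; exact hp.2
    · have := htail p.2 h2
      omega
  · intro p hp
    simp only [Finset.mem_filter, Finset.mem_univ, true_and, Fin.lt_def] at hp ⊢
    refine ⟨hp.1, ?_⟩
    rcases lt_or_ge (p.2 : ℕ) l with h2 | h2
    · have h3 : τ⁻¹ p.2 = p.2 := τ.injective (by simp [hτ p.2 h2])
      rw [h3]; exact hp.2
    · have := htail' p.2 h2
      omega
  · intro p _; simp
  · intro p _; simp
  · intro p hp
    simp only [Finset.mem_filter, Finset.mem_univ, true_and] at hp
    have h1 : τ p.1 = p.1 := hτ p.1 hp.1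
    dsimp only
    rw [h1]

-- (b) swapping two adjacent positions among the first l flips the sign
lemma ratioProd_swap {n l q : ℕ} (x : Fin n → K n) (hq : q + 1 < l) (hl : l ≤ n) :
    ratioProd l (fun j => x (Equiv.swap (⟨q, by omega⟩ : Fin n) (⟨q + 1, by omega⟩ : Fin n) j))
      = - ratioProd l x := by
  have hqn : q < n := by omega
  have hq1n : q + 1 < n := by omega
  set u : Fin n := ⟨q, hqn⟩ with hu
  set v : Fin n := ⟨q + 1, hq1n⟩ with hv
  set τ := Equiv.swap u v with hτdef
  have hswapval : ∀ z : Fin n, ((τ z : Fin n) : ℕ)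
      = if (z : ℕ) = q then q + 1 else if (z : ℕ) = q + 1 then q else (z : ℕ) :=
    fun z => swap_val u v z
  have huv : (u, v) ∈ Finset.univ.filter
      (fun p : Fin n × Fin n => (p.1 : ℕ) < l ∧ p.1 < p.2) := by
    simp only [Finset.mem_filter, Finset.mem_univ, true_and, Fin.lt_def]
    exact ⟨show q < l by omega, show q < q + 1 by omega⟩
  unfold ratioProd
  rw [← Finset.mul_prod_erase _ _ huv, ← Finset.mul_prod_erase _ _ huv]
  have hfirst : (x (τ u) + x (τ v)) / (x (τ u) - x (τ v))
      = - ((x u + x v) / (x u - x v)) := by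
    rw [hτdef, Equiv.swap_apply_left, Equiv.swap_apply_right]
    rw [show x v - x u = -(x u - x v) by ring]
    generalize x u - x v = D
    ring
  have hrest : ∏ p ∈ (Finset.univ.filter
        (fun p : Fin n × Fin n => (p.1 : ℕ) < l ∧ p.1 < p.2)).erase (u, v),
      (x (τ p.1) + x (τ p.2)) / (x (τ p.1) - x (τ p.2))
      = ∏ p ∈ (Finset.univ.filter
        (fun p : Fin n × Fin n => (p.1 : ℕ) < l ∧ p.1 < p.2)).erase (u, v),
      (x p.1 + x p.2) / (x p.1 - x p.2) := by
    have hmem : ∀ p : Fin n × Fin n, p ∈ (Finset.univ.filter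
        (fun p : Fin n × Fin n => (p.1 : ℕ) < l ∧ p.1 < p.2)).erase (u, v) →
        (τ p.1, τ p.2) ∈ (Finset.univ.filter
        (fun p : Fin n × Fin n => (p.1 : ℕ) < l ∧ p.1 < p.2)).erase (u, v) := by
      intro p hp
      rw [Finset.mem_erase, Finset.mem_filter] at hp
      obtain ⟨hne, -, h1, h2⟩ := hp
      rw [Fin.lt_def] at h2
      have hne' : ¬ ((p.1 : ℕ) = q ∧ (p.2 : ℕ) = q + 1) := by
        intro ⟨e1, e2⟩
        exact hne (Prod.ext (Fin.ext e1) (Fin.ext e2))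
      have hv1 := hswapval p.1
      have hv2 := hswapval p.2
      rw [Finset.mem_erase, Finset.mem_filter]
      refine ⟨?_, Finset.mem_univ _, ?_, ?_⟩
      · intro he
        rw [Prod.ext_iff] at he
        have e1 : ((τ p.1 : Fin n) : ℕ) = q := congrArg Fin.val he.1
        have e2 : ((τ p.2 : Fin n) : ℕ) = q + 1 := congrArg Fin.val he.2
        rw [hv1] at e1; rw [hv2] at e2
        split_ifs at e1 e2 <;> omega
      · show ((τ p.1 : Fin n) : ℕ) < l
        rw [hv1]; split_ifs <;> omega
      · show ((τ p.1 : Fin n) : ℕ) < ((τ p.2 : Fin n) : ℕ)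
        rw [hv1, hv2]; split_ifs <;> omega
    refine Finset.prod_nbij' (fun p => (τ p.1, τ p.2)) (fun p => (τ p.1, τ p.2))
      hmem hmem ?_ ?_ ?_
    · intro p _; simp [hτdef]
    · intro p _; simp [hτdef]
    · intro p _; rfl
  rw [hrest, hfirst]
  ring

-- (c) splitting off the last row
lemma ratioProd_succ {n l : ℕ} (x : Fin n → K n) (hl : l < n) :
    ratioProd (l + 1) x = ratioProd l x *
      ∏ j ∈ Finset.univ.filter (fun j : Fin n => l < (j : ℕ)),
        (x ⟨l, hl⟩ + x j) / (x ⟨l, hl⟩ - x j) := by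
  unfold ratioProd
  have hsplit : Finset.univ.filter (fun p : Fin n × Fin n => (p.1 : ℕ) < l + 1 ∧ p.1 < p.2)
      = Finset.univ.filter (fun p : Fin n × Fin n => (p.1 : ℕ) < l ∧ p.1 < p.2)
        ∪ Finset.univ.filter (fun p : Fin n × Fin n => (p.1 : ℕ) = l ∧ p.1 < p.2) := by
    rw [← Finset.filter_or]
    apply Finset.filter_congr
    intro p _
    constructor
    · rintro ⟨h1, h2⟩
      rcases Nat.lt_or_ge (p.1 : ℕ) l with h | h
      · exact Or.inl ⟨h, h2⟩
      · exact Or.inr ⟨by omega, h2⟩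
    · rintro (⟨h1, h2⟩ | ⟨h1, h2⟩) <;> exact ⟨by omega, h2⟩
  rw [hsplit, Finset.prod_union]
  · congr 1
    refine Finset.prod_nbij' (fun p => p.2) (fun j => (⟨l, hl⟩, j)) ?_ ?_ ?_ ?_ ?_
    · intro p hp
      simp only [Finset.mem_filter, Finset.mem_univ, true_and, Fin.lt_def] at hp ⊢
      omega
    · intro j hj
      simp only [Finset.mem_filter, Finset.mem_univ, true_and, Fin.lt_def] at hj ⊢
      omega
    · intro p hp
      simp only [Finset.mem_filter, Finset.mem_univ, true_and] at hp
      have h1 : p.1 = (⟨l, hl⟩ : Fin n) := Fin.ext hp.1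
      rw [← h1]
    · intro j _; rfl
    · intro p hp
      simp only [Finset.mem_filter, Finset.mem_univ, true_and] at hp
      have h1 : p.1 = (⟨l, hl⟩ : Fin n) := Fin.ext hp.1
      rw [h1]
  · rw [Finset.disjoint_filter]
    intro p _ h1 h2
    omega


noncomputable section TsumSection

def Tsum (a : ℕ → ℂ) (n l : ℕ) (hl : l ≤ n) (ν : ℕ → ℕ) : K n :=
  ∑ ω : Equiv.Perm (Fin n),
    (∏ i : Fin l, ∏ k ∈ Finset.range (ν i), (Xv (ω (Fin.castLE hl i)) - Cv (a (k + 1)))) *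
      ratioProd l (fun j => Xv (ω j))

lemma Tsum_vanish (a : ℕ → ℂ) (n l : ℕ) (hl : l ≤ n) (ν : ℕ → ℕ) (i : ℕ)
    (hi : i + 1 < l) (he : ν (i + 1) = ν i) : Tsum a n l hl ν = 0 := by
  have hin : i < n := by omega
  have hi1n : i + 1 < n := by omega
  set u : Fin n := ⟨i, hin⟩ with hu
  set v : Fin n := ⟨i + 1, hi1n⟩ with hv
  set τ : Equiv.Perm (Fin n) := Equiv.swap u v with hτ
  set F : Equiv.Perm (Fin n) → K n := fun ω =>
    (∏ i' : Fin l, ∏ k ∈ Finset.range (ν i'), (Xv (ω (Fin.castLE hl i')) - Cv (a (k + 1)))) *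
      ratioProd l (fun j => Xv (ω j)) with hF
  have key : ∀ ω : Equiv.Perm (Fin n), F (ω * τ) = - F ω := by
    intro ω
    have hmul : ∀ j : Fin n, (ω * τ) j = ω (τ j) := fun j => rfl
    set ui : Fin l := ⟨i, by omega⟩ with hui
    set vi : Fin l := ⟨i + 1, hi⟩ with hvi
    set σ : Equiv.Perm (Fin l) := Equiv.swap ui vi with hσ
    have hcast : ∀ i' : Fin l, τ (Fin.castLE hl i') = Fin.castLE hl (σ i') := by
      intro i'
      apply Fin.ext
      rw [hτ, hσ, swap_val]
      have h2 : ((Fin.castLE hl (Equiv.swap ui vi i') : Fin n) : ℕ)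
          = ((Equiv.swap ui vi i' : Fin l) : ℕ) := rfl
      rw [h2, swap_val]
      rfl
    have hφ : (∏ i' : Fin l, ∏ k ∈ Finset.range (ν i'),
          (Xv ((ω * τ) (Fin.castLE hl i')) - Cv (a (k + 1))))
        = ∏ i' : Fin l, ∏ k ∈ Finset.range (ν i'),
          (Xv (ω (Fin.castLE hl i')) - Cv (a (k + 1))) := by
      have hν : ∀ i' : Fin l, ν i' = ν ((σ i' : Fin l) : ℕ) := by
        intro i'
        rw [hσ, swap_val]
        have : ((ui : Fin l) : ℕ) = i := rfl
        have : ((vi : Fin l) : ℕ) = i + 1 := rfl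
        split_ifs with h1 h2
        · show ν _ = ν (i + 1)
          have h1' : (i' : ℕ) = i := h1
          rw [h1', he]
        · show ν _ = ν i
          have h2' : (i' : ℕ) = i + 1 := h2
          rw [h2', he]
        · rfl
      calc (∏ i' : Fin l, ∏ k ∈ Finset.range (ν i'),
          (Xv ((ω * τ) (Fin.castLE hl i')) - Cv (a (k + 1))))
          = ∏ i' : Fin l, ∏ k ∈ Finset.range (ν ((σ i' : Fin l) : ℕ)),
            (Xv (ω (Fin.castLE hl (σ i'))) - Cv (a (k + 1))) := by
            refine Finset.prod_congr rfl fun i' _ => ?_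
            rw [hmul, hcast, ← hν]
        _ = ∏ i' : Fin l, ∏ k ∈ Finset.range (ν i'),
            (Xv (ω (Fin.castLE hl i')) - Cv (a (k + 1))) :=
            Equiv.prod_comp σ (fun i' : Fin l => ∏ k ∈ Finset.range (ν i'),
              (Xv (ω (Fin.castLE hl i')) - Cv (a (k + 1))))
    have hratio : ratioProd l (fun j => Xv ((ω * τ) j)) = - ratioProd l (fun j => Xv (ω j)) := by
      have := ratioProd_swap (n := n) (l := l) (q := i) (fun j => Xv (ω j)) hi hl
      exact this
    rw [hF]
    dsimp only
    rw [hφ, hratio]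
    ring
  have hsum : ∑ ω : Equiv.Perm (Fin n), F ω = ∑ ω : Equiv.Perm (Fin n), F (ω * τ) :=
    (Equiv.sum_comp (Equiv.mulRight τ) F).symm
  have h2 : Tsum a n l hl ν = - Tsum a n l hl ν := by
    calc Tsum a n l hl ν = ∑ ω : Equiv.Perm (Fin n), F ω := rfl
      _ = ∑ ω : Equiv.Perm (Fin n), F (ω * τ) := hsum
      _ = ∑ ω : Equiv.Perm (Fin n), - F ω := Finset.sum_congr rfl (fun ω _ => key ω)
      _ = - ∑ ω : Equiv.Perm (Fin n), F ω := Finset.sum_neg_distrib _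
      _ = - Tsum a n l hl ν := rfl
  have h3 : (2 : K n) * Tsum a n l hl ν = 0 := by
    rw [two_mul]
    nth_rewrite 2 [h2]
    ring
  rcases mul_eq_zero.mp h3 with h | h
  · exact absurd h two_ne_zero
  · exact h

end TsumSection

noncomputable section Key1

def bump (ν : ℕ → ℕ) (i0 : ℕ) : ℕ → ℕ := fun i => if i = i0 then ν i0 + 1 else ν i

def tailSet (n l : ℕ) : Finset (Fin n) := Finset.univ.filter (fun j : Fin n => l ≤ (j : ℕ))

def Btail (a : ℕ → ℂ) (n l : ℕ) (hl : l ≤ n) (ν : ℕ → ℕ) : K n :=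
  ∑ ω : Equiv.Perm (Fin n),
    ((∏ i : Fin l, ∏ k ∈ Finset.range (ν i), (Xv (ω (Fin.castLE hl i)) - Cv (a (k + 1)))) *
      ratioProd l (fun j => Xv (ω j))) * ∑ j ∈ tailSet n l, Xv (ω j)

set_option maxHeartbeats 1000000 in
lemma key1 (a : ℕ → ℂ) (n l : ℕ) (hl : l ≤ n) (ν : ℕ → ℕ) :
    Tsum a n l hl ν * ((∑ i : Fin n, Xv i) - Cv (∑ j ∈ Finset.range l, a (ν j + 1)))
      = (∑ i0 : Fin l, Tsum a n l hl (bump ν i0)) + Btail a n l hl ν := by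
  have hswap : (∑ i0 : Fin l, Tsum a n l hl (bump ν i0))
      = ∑ ω : Equiv.Perm (Fin n), ∑ i0 : Fin l,
        (∏ i : Fin l, ∏ k ∈ Finset.range (bump ν i0 i), (Xv (ω (Fin.castLE hl i)) - Cv (a (k + 1)))) *
          ratioProd l (fun j => Xv (ω j)) := by
    rw [Finset.sum_comm]
    rfl
  rw [hswap, Tsum, Finset.sum_mul, Btail, ← Finset.sum_add_distrib]
  refine Finset.sum_congr rfl fun ω _ => ?_
  set Fφ : K n := ∏ i : Fin l, ∏ k ∈ Finset.range (ν i),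
    (Xv (ω (Fin.castLE hl i)) - Cv (a (k + 1))) with hFφ
  set R : K n := ratioProd l (fun j => Xv (ω j)) with hR
  -- decompose the multiplier
  have hM : (∑ i : Fin n, Xv i) - Cv (∑ j ∈ Finset.range l, a (ν j + 1))
      = (∑ i0 : Fin l, (Xv (ω (Fin.castLE hl i0)) - Cv (a (ν i0 + 1))))
        + ∑ j ∈ tailSet n l, Xv (ω j) := by
    have h1 : (∑ i : Fin n, Xv i) = ∑ i : Fin n, Xv (ω i) :=
      (Equiv.sum_comp ω Xv).symm
    have h2 : (∑ i : Fin n, Xv (ω i))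
        = ∑ j ∈ Finset.univ.filter (fun j : Fin n => (j : ℕ) < l), Xv (ω j)
          + ∑ j ∈ tailSet n l, Xv (ω j) := by
      rw [← Finset.sum_filter_add_sum_filter_not Finset.univ (fun j : Fin n => (j : ℕ) < l)]
      congr 1
      apply Finset.sum_congr _ (fun _ _ => rfl)
      apply Finset.filter_congr
      intro j _
      simp [tailSet, not_lt]
    have h3 : ∑ j ∈ Finset.univ.filter (fun j : Fin n => (j : ℕ) < l), Xv (ω j)
        = ∑ i0 : Fin l, Xv (ω (Fin.castLE hl i0)) := by
      refine Finset.sum_bij' (fun j hj => (⟨(j : ℕ), by simpa using hj⟩ : Fin l))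
        (fun i0 _ => Fin.castLE hl i0) ?_ ?_ ?_ ?_ ?_
      · intro j hj; exact Finset.mem_univ _
      · intro i0 _
        simp only [Finset.mem_filter, Finset.mem_univ, true_and]
        exact i0.2
      · intro j hj; rfl
      · intro i0 _; rfl
      · intro j hj; rfl
    have h4 : Cv (n := n) (∑ j ∈ Finset.range l, a (ν j + 1))
        = ∑ i0 : Fin l, Cv (a (ν i0 + 1)) := by
      rw [Cv_sum]
      exact (Fin.sum_univ_eq_sum_range (fun j => Cv (a (ν j + 1))) l).symm
    rw [h1, h2, h3, h4, Finset.sum_sub_distrib]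
    ring
  rw [hM]
  have hbump : ∀ i0 : Fin l,
      (∏ i : Fin l, ∏ k ∈ Finset.range (bump ν i0 i), (Xv (ω (Fin.castLE hl i)) - Cv (a (k + 1))))
        = Fφ * (Xv (ω (Fin.castLE hl i0)) - Cv (a (ν i0 + 1))) := by
    intro i0
    rw [hFφ]
    rw [← Finset.mul_prod_erase Finset.univ
        (fun i : Fin l => ∏ k ∈ Finset.range (bump ν i0 i), (Xv (ω (Fin.castLE hl i)) - Cv (a (k + 1))))
        (Finset.mem_univ i0),
      ← Finset.mul_prod_erase Finset.univ
        (fun i : Fin l => ∏ k ∈ Finset.range (ν i), (Xv (ω (Fin.castLE hl i)) - Cv (a (k + 1))))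
        (Finset.mem_univ i0)]
    have hat : (∏ k ∈ Finset.range (bump ν i0 i0), (Xv (ω (Fin.castLE hl i0)) - Cv (a (k + 1))))
        = (∏ k ∈ Finset.range (ν i0), (Xv (ω (Fin.castLE hl i0)) - Cv (a (k + 1))))
          * (Xv (ω (Fin.castLE hl i0)) - Cv (a (ν i0 + 1))) := by
      have : bump ν i0 (i0 : ℕ) = ν i0 + 1 := if_pos rfl
      rw [this, Finset.prod_range_succ]
    have hoff : (∏ i ∈ Finset.univ.erase i0, ∏ k ∈ Finset.range (bump ν i0 i),
          (Xv (ω (Fin.castLE hl i)) - Cv (a (k + 1))))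
        = ∏ i ∈ Finset.univ.erase i0, ∏ k ∈ Finset.range (ν i),
          (Xv (ω (Fin.castLE hl i)) - Cv (a (k + 1))) := by
      refine Finset.prod_congr rfl fun i hi => ?_
      have hne : (i : ℕ) ≠ (i0 : ℕ) :=
        fun h => (Finset.ne_of_mem_erase hi) (Fin.ext h)
      rw [show bump ν i0 (i : ℕ) = ν i from if_neg hne]
    rw [hat, hoff]
    ring
  calc Fφ * R * ((∑ i0 : Fin l, (Xv (ω (Fin.castLE hl i0)) - Cv (a (ν i0 + 1))))
        + ∑ j ∈ tailSet n l, Xv (ω j))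
      = (∑ i0 : Fin l, Fφ * (Xv (ω (Fin.castLE hl i0)) - Cv (a (ν i0 + 1))) * R)
        + Fφ * R * ∑ j ∈ tailSet n l, Xv (ω j) := by
        rw [mul_add, Finset.mul_sum]
        congr 1
        refine Finset.sum_congr rfl fun i0 _ => ?_
        ring
    _ = (∑ i0 : Fin l,
        (∏ i : Fin l, ∏ k ∈ Finset.range (bump ν i0 i), (Xv (ω (Fin.castLE hl i)) - Cv (a (k + 1))))
          * R) + Fφ * R * ∑ j ∈ tailSet n l, Xv (ω j) := by
        congr 1
        refine Finset.sum_congr rfl fun i0 _ => ?_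
        rw [hbump i0]

end Key1


section Star
open Finset Polynomial

theorem star_identity {F : Type*} [Field F] [CharZero F] {ι : Type*} [DecidableEq ι]
    (s : Finset ι) (y : ι → F) (hy : Set.InjOn y s) :
    ∑ k ∈ s, y k * ∏ j ∈ s.erase k, ((y k + y j) / (y k - y j)) = ∑ k ∈ s, y k := by
  rcases s.eq_empty_or_nonempty with rfl | hne
  · simp
  set m := s.card with hm
  have hm1 : 1 ≤ m := Finset.card_pos.mpr hne
  set q : F[X] := ∏ j ∈ s, (X + C (y j)) with hq
  set p : F[X] := ∏ j ∈ s, (X - C (y j)) with hp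
  have hqm : q.Monic := monic_prod_of_monic _ _ fun j _ => monic_X_add_C _
  have hpm : p.Monic := monic_prod_of_monic _ _ fun j _ => monic_X_sub_C _
  have hqdeg : q.degree = (m : WithBot ℕ) := by
    rw [hq, degree_prod]
    simp [degree_X_add_C, hm]
  have hpdeg : p.degree = (m : WithBot ℕ) := by
    rw [hp, degree_prod]
    simp [degree_X_sub_C, hm]
  have hq0 : q ≠ 0 := hqm.ne_zero
  have hfdeg : (q - p).degree < (m : WithBot ℕ) := by
    have := Polynomial.degree_sub_lt (hqdeg.trans hpdeg.symm) hq0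
      (by rw [hqm.leadingCoeff, hpm.leadingCoeff])
    rwa [hqdeg] at this
  have hinterp : q - p = Lagrange.interpolate s y (fun i => (q - p).eval (y i)) :=
    Lagrange.eq_interpolate hy (by rwa [← hm])
  -- evaluations
  have heval : ∀ i ∈ s, (q - p).eval (y i) = 2 * (y i * ∏ j ∈ s.erase i, (y i + y j)) := by
    intro i hi
    have hp0 : p.eval (y i) = 0 := by
      rw [hp, eval_prod]
      exact Finset.prod_eq_zero hi (by simp)
    rw [eval_sub, hp0, sub_zero, hq, eval_prod]
    have := Finset.mul_prod_erase s (fun j => (y i + y j)) hi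
    simp only [eval_add, eval_X, eval_C] at *
    rw [← this]; ring
  -- coeff (m-1) of q - p
  have hnq : q.nextCoeff = ∑ j ∈ s, y j := by
    rw [hq, Polynomial.Monic.nextCoeff_prod _ _ (fun j _ => monic_X_add_C _)]
    simp [nextCoeff_X_add_C]
  have hnp : p.nextCoeff = -∑ j ∈ s, y j := by
    rw [hp, Polynomial.Monic.nextCoeff_prod _ _ (fun j _ => monic_X_sub_C _)]
    simp [nextCoeff_X_sub_C]
  have hqnd : q.natDegree = m := natDegree_eq_of_degree_eq_some hqdeg
  have hpnd : p.natDegree = m := natDegree_eq_of_degree_eq_some hpdeg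
  have hcoef : (q - p).coeff (m - 1) = 2 * ∑ j ∈ s, y j := by
    rw [coeff_sub]
    have h1 : q.coeff (m - 1) = q.nextCoeff := by
      rw [nextCoeff, if_neg (by omega : ¬ q.natDegree = 0), hqnd]
    have h2 : p.coeff (m - 1) = p.nextCoeff := by
      rw [nextCoeff, if_neg (by omega : ¬ p.natDegree = 0), hpnd]
    rw [h1, h2, hnq, hnp]; ring
  -- coeff (m-1) of the interpolation
  have hbasis : ∀ i ∈ s, (Lagrange.basis s y i).coeff (m - 1)
      = ∏ j ∈ s.erase i, (y i - y j)⁻¹ := by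
    intro i hi
    have hdeg : (Lagrange.basis s y i).degree = ((m - 1 : ℕ) : WithBot ℕ) :=
      Lagrange.degree_basis hy hi
    have hnd : (Lagrange.basis s y i).natDegree = m - 1 := natDegree_eq_of_degree_eq_some hdeg
    have : (Lagrange.basis s y i).coeff (m - 1) = (Lagrange.basis s y i).leadingCoeff := by
      rw [leadingCoeff, hnd]
    rw [this, Lagrange.basis, leadingCoeff_prod]
    refine Finset.prod_congr rfl fun j hj => ?_
    have hij : y i ≠ y j := fun h => (Finset.ne_of_mem_erase hj)
      (hy (Finset.mem_of_mem_erase hj) hi h.symm)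
    rw [Lagrange.basisDivisor, leadingCoeff_mul, leadingCoeff_C, leadingCoeff_X_sub_C, mul_one]
  have hcoef2 : (q - p).coeff (m - 1)
      = ∑ i ∈ s, (q - p).eval (y i) * ∏ j ∈ s.erase i, (y i - y j)⁻¹ := by
    conv_lhs => rw [hinterp]
    rw [Lagrange.interpolate_apply, finset_sum_coeff]
    refine Finset.sum_congr rfl fun i hi => ?_
    rw [coeff_C_mul, hbasis i hi]
  rw [hcoef] at hcoef2
  have key : (2 : F) * ∑ j ∈ s, y j
      = 2 * ∑ k ∈ s, y k * ∏ j ∈ s.erase k, ((y k + y j) / (y k - y j)) := by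
    rw [hcoef2, Finset.mul_sum]
    refine Finset.sum_congr rfl fun i hi => ?_
    rw [heval i hi]
    simp only [div_eq_mul_inv, Finset.prod_mul_distrib, Finset.prod_inv_distrib]
    ring
  exact (mul_left_cancel₀ (two_ne_zero (α := F)) key).symm


end Star

noncomputable section Key3

lemma tailSet_card (n l : ℕ) : (tailSet n l).card = n - l := by
  have h : (tailSet n l).card = (Finset.Ico l n).card := by
    refine Finset.card_bij' (fun j _ => (j : ℕ)) (fun m hm => (⟨m, (Finset.mem_Ico.mp hm).2⟩ : Fin n)) ?_ ?_ ?_ ?_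
    · intro j hj
      simp only [tailSet, Finset.mem_filter, Finset.mem_univ, true_and] at hj
      exact Finset.mem_Ico.mpr ⟨hj, j.2⟩
    · intro m hm
      simp only [tailSet, Finset.mem_filter, Finset.mem_univ, true_and]
      exact (Finset.mem_Ico.mp hm).1
    · intro j _; rfl
    · intro m _; rfl
  rw [h, Nat.card_Ico]

lemma Btail_eq_zero (a : ℕ → ℂ) (n l : ℕ) (hl : l ≤ n) (hln : n ≤ l) (ν : ℕ → ℕ) :
    Btail a n l hl ν = 0 := by
  have hempty : tailSet n l = ∅ := by
    rw [tailSet, Finset.filter_false_of_mem]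
    intro j _
    have := j.2
    omega
  rw [Btail]
  apply Finset.sum_eq_zero
  intro ω _
  rw [hempty, Finset.sum_empty, mul_zero]

set_option maxHeartbeats 2000000 in
lemma key3 (a : ℕ → ℂ) (ha : a 1 = 0) (n l : ℕ) (hl' : l + 1 ≤ n) (ν : ℕ → ℕ) :
    ((n - l : ℕ) : K n) * Tsum a n (l + 1) hl' (fun i => if i = l then 1 else ν i)
      = Btail a n l (Nat.le_of_succ_le hl') ν := by
  have hl : l ≤ n := Nat.le_of_succ_le hl'
  have hln : l < n := hl'
  set fl : Fin n := ⟨l, hln⟩ with hfl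
  set A : Equiv.Perm (Fin n) → K n := fun ω =>
    (∏ i : Fin l, ∏ k ∈ Finset.range (ν i), (Xv (ω (Fin.castLE hl i)) - Cv (a (k + 1)))) *
      ratioProd l (fun j => Xv (ω j)) with hA
  set G : Equiv.Perm (Fin n) → K n := fun ω =>
    ∏ j ∈ (tailSet n l).erase fl, (Xv (ω fl) + Xv (ω j)) / (Xv (ω fl) - Xv (ω j)) with hG
  have hfilter : Finset.univ.filter (fun j : Fin n => l < (j : ℕ)) = (tailSet n l).erase fl := by
    ext j
    simp only [Finset.mem_filter, Finset.mem_univ, true_and, Finset.mem_erase, tailSet]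
    constructor
    · intro h
      refine ⟨fun hj => ?_, le_of_lt h⟩
      rw [hj] at h
      exact lt_irrefl l h
    · rintro ⟨hne, hge⟩
      rcases lt_or_eq_of_le hge with h | h
      · exact h
      · exact absurd (Fin.ext h.symm) hne
  -- Step A
  have stepA : Tsum a n (l + 1) hl' (fun i => if i = l then 1 else ν i)
      = ∑ ω : Equiv.Perm (Fin n), A ω * (Xv (ω fl) * G ω) := by
    rw [Tsum]
    refine Finset.sum_congr rfl fun ω _ => ?_
    have hφ : (∏ i : Fin (l + 1), ∏ k ∈ Finset.range (if ((i : Fin (l+1)) : ℕ) = l then 1 else ν i),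
          (Xv (ω (Fin.castLE hl' i)) - Cv (a (k + 1))))
        = (∏ i : Fin l, ∏ k ∈ Finset.range (ν i), (Xv (ω (Fin.castLE hl i)) - Cv (a (k + 1))))
          * Xv (ω fl) := by
      rw [Fin.prod_univ_castSucc]
      congr 1
      · refine Finset.prod_congr rfl fun i _ => ?_
        have h2 : Fin.castLE hl' (Fin.castSucc i) = Fin.castLE hl i := Fin.ext rfl
        have h3 : (if ((Fin.castSucc i : Fin (l+1)) : ℕ) = l then 1 else ν ((Fin.castSucc i : Fin (l+1)) : ℕ))
            = ν (i : ℕ) := by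
          have : ((Fin.castSucc i : Fin (l+1)) : ℕ) = (i : ℕ) := rfl
          rw [this, if_neg (Nat.ne_of_lt i.2)]
        rw [h2, h3]
      · have h2 : Fin.castLE hl' (Fin.last l) = fl := Fin.ext rfl
        have h3 : (if ((Fin.last l : Fin (l+1)) : ℕ) = l then 1 else ν ((Fin.last l : Fin (l+1)) : ℕ))
            = 1 := if_pos rfl
        rw [h2, h3, Finset.prod_range_one, ha, Cv_zero, sub_zero]
    have hratio := ratioProd_succ (fun j => Xv (ω j)) hln
    rw [hφ, hratio, hfilter]
    rw [hA, hG]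
    dsimp only
    ring
  -- Step B
  have stepB : ∀ k ∈ tailSet n l,
      (∑ ω : Equiv.Perm (Fin n), A ω * (Xv (ω fl) * G ω))
        = ∑ ω : Equiv.Perm (Fin n), A ω * (Xv (ω k) *
            ∏ j ∈ (tailSet n l).erase k, (Xv (ω k) + Xv (ω j)) / (Xv (ω k) - Xv (ω j))) := by
    intro k hk
    have hkl : l ≤ (k : ℕ) := by
      simpa [tailSet] using hk
    set τ : Equiv.Perm (Fin n) := Equiv.swap fl k with hτ
    have hτfl : τ fl = k := Equiv.swap_apply_left fl k
    have hτfix : ∀ i : Fin n, (i : ℕ) < l → τ i = i := by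
      intro i hi
      apply Equiv.swap_apply_of_ne_of_ne
      · exact fun h => by rw [h] at hi; exact absurd hi (lt_irrefl l)
      · exact fun h => by rw [h] at hi; omega
    calc (∑ ω : Equiv.Perm (Fin n), A ω * (Xv (ω fl) * G ω))
        = ∑ ω : Equiv.Perm (Fin n), A ((Equiv.mulRight τ) ω) * (Xv (((Equiv.mulRight τ) ω) fl)
            * G ((Equiv.mulRight τ) ω)) :=
          (Equiv.sum_comp (Equiv.mulRight τ) (fun ω => A ω * (Xv (ω fl) * G ω))).symm
      _ = ∑ ω : Equiv.Perm (Fin n), A ω * (Xv (ω k) *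
            ∏ j ∈ (tailSet n l).erase k, (Xv (ω k) + Xv (ω j)) / (Xv (ω k) - Xv (ω j))) := by
          refine Finset.sum_congr rfl fun ω _ => ?_
          have hmul : ∀ j : Fin n, ((Equiv.mulRight τ) ω) j = ω (τ j) := fun j => rfl
          have hAeq : A ((Equiv.mulRight τ) ω) = A ω := by
            rw [hA]
            dsimp only
            congr 1
            · refine Finset.prod_congr rfl fun i _ => ?_
              rw [hmul, hτfix (Fin.castLE hl i) i.2]
            · exact ratioProd_comp_fix (fun j => Xv (ω j)) τ hτfix
          have hXeq : Xv (((Equiv.mulRight τ) ω) fl) = Xv (ω k) := by rw [hmul, hτfl]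
          have hGeq : G ((Equiv.mulRight τ) ω)
              = ∏ j ∈ (tailSet n l).erase k, (Xv (ω k) + Xv (ω j)) / (Xv (ω k) - Xv (ω j)) := by
            rw [hG]
            dsimp only
            refine Finset.prod_nbij' (fun j => τ j) (fun j => τ j) ?_ ?_ ?_ ?_ ?_
            · intro j hj
              rw [Finset.mem_erase] at hj ⊢
              obtain ⟨hjfl, hjmem⟩ := hj
              have hjl : l ≤ (j : ℕ) := by simpa [tailSet] using hjmem
              by_cases hjk : j = k
              · subst hjk
                rw [hτ, Equiv.swap_apply_right]
                refine ⟨fun h => hjfl h.symm, ?_⟩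
                simp [tailSet, hfl]
              · rw [hτ, Equiv.swap_apply_of_ne_of_ne hjfl hjk]
                exact ⟨hjk, hjmem⟩
            · intro j hj
              rw [Finset.mem_erase] at hj ⊢
              obtain ⟨hjk, hjmem⟩ := hj
              have hjl : l ≤ (j : ℕ) := by simpa [tailSet] using hjmem
              by_cases hjfl : j = fl
              · subst hjfl
                rw [hτ, Equiv.swap_apply_left]
                refine ⟨fun h => hjk h.symm, ?_⟩
                simp [tailSet, hkl]
              · rw [hτ, Equiv.swap_apply_of_ne_of_ne hjfl hjk]
                exact ⟨hjfl, hjmem⟩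
            · intro j _; simp [hτ]
            · intro j _; simp [hτ]
            · intro j _
              rw [hmul, hmul, hτfl]
          rw [hAeq, hXeq, hGeq]
  -- Step C
  rw [stepA]
  have hcast : ((n - l : ℕ) : K n) * (∑ ω : Equiv.Perm (Fin n), A ω * (Xv (ω fl) * G ω))
      = ∑ k ∈ tailSet n l, ∑ ω : Equiv.Perm (Fin n), A ω * (Xv (ω fl) * G ω) := by
    rw [Finset.sum_const, tailSet_card, nsmul_eq_mul]
  rw [hcast]
  calc ∑ k ∈ tailSet n l, ∑ ω : Equiv.Perm (Fin n), A ω * (Xv (ω fl) * G ω)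
      = ∑ k ∈ tailSet n l, ∑ ω : Equiv.Perm (Fin n), A ω * (Xv (ω k) *
          ∏ j ∈ (tailSet n l).erase k, (Xv (ω k) + Xv (ω j)) / (Xv (ω k) - Xv (ω j))) :=
        Finset.sum_congr rfl stepB
    _ = ∑ ω : Equiv.Perm (Fin n), ∑ k ∈ tailSet n l, A ω * (Xv (ω k) *
          ∏ j ∈ (tailSet n l).erase k, (Xv (ω k) + Xv (ω j)) / (Xv (ω k) - Xv (ω j))) :=
        Finset.sum_comm
    _ = ∑ ω : Equiv.Perm (Fin n), A ω * ∑ k ∈ tailSet n l, Xv (ω k) := by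
        refine Finset.sum_congr rfl fun ω _ => ?_
        rw [← Finset.mul_sum]
        congr 1
        have hinj : Set.InjOn (fun j : Fin n => Xv (ω j)) ↑(tailSet n l) :=
          fun j _ j' _ h => ω.injective (Xv_injective h)
        exact star_identity (tailSet n l) (fun j : Fin n => Xv (ω j)) hinj
    _ = Btail a n l (Nat.le_of_succ_le hl') ν := by
        rw [Btail]

end Key3


/-- A strict partition: strictly decreasing positive parts `parts 0 > parts 1 > ⋯`,
indexed from `0`, with `parts i = 0` for `i ≥ l`. -/
structure SPartition where
  l : ℕ
  parts : ℕ → ℕ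
  strict : ∀ i, i + 1 < l → parts (i + 1) < parts i
  pos : ∀ i, i < l → 0 < parts i
  zero : ∀ i, l ≤ i → parts i = 0

def SPartition.size (lam : SPartition) : ℕ := ∑ i ∈ Finset.range lam.l, lam.parts i

/-- The multiparameter Schur P-polynomial `P_{λ;a|n}`, as an element of the field of
rational functions in `n` variables (by convention `0` if `n < ℓ(λ)`). -/
def Pmulti (lam : SPartition) (a : ℕ → ℂ) (n : ℕ) : K n :=
  if hl : lam.l ≤ n then
    Cv (((n - lam.l).factorial : ℂ))⁻¹ *
      ∑ ω : Equiv.Perm (Fin n),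
        (∏ i : Fin lam.l,
            ∏ k ∈ Finset.range (lam.parts i.1),
              (Xv (ω (Fin.castLE hl i)) - Cv (a (k + 1)))) *
          ratioProd lam.l (fun j => Xv (ω j))
  else 0


/-- `λ` covers `μ` in the Schur graph: `μ ⊂ λ` and `|λ| = |μ| + 1`. -/
def Covers (mu lam : SPartition) : Prop :=
  (∀ i, mu.parts i ≤ lam.parts i) ∧ lam.size = mu.size + 1


noncomputable section Partitions

theorem SPartition.ext' {p q : SPartition} (h1 : p.l = q.l) (h2 : p.parts = q.parts) : p = q := by
  cases p; cases q
  cases h1; cases h2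
  rfl

def CanAdd (mu : SPartition) (i0 : ℕ) : Prop :=
  i0 ≤ mu.l ∧ (i0 = 0 ∨ mu.parts i0 + 1 < mu.parts (i0 - 1))

open Classical in
def addBox (mu : SPartition) (i0 : ℕ) : SPartition :=
  if h : CanAdd mu i0 then
    { l := if i0 = mu.l then mu.l + 1 else mu.l
      parts := fun i => if i = i0 then mu.parts i0 + 1 else mu.parts i
      strict := by
        intro i hi
        by_cases hc : i0 = mu.l
        · rw [if_pos hc] at hi
          split_ifs with h1 h2
          · omega
          · obtain ⟨hle, hor⟩ := h
            have hi' : i = i0 - 1 := by omega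
            rcases hor with h0 | hlt
            · omega
            · rw [hi']; exact hlt
          · omega
          · exact mu.strict i (by omega)
        · rw [if_neg hc] at hi
          obtain ⟨hle, hor⟩ := h
          split_ifs with h1 h2
          · omega
          · have hi' : i = i0 - 1 := by omega
            rcases hor with h0 | hlt
            · omega
            · rw [hi']; exact hlt
          · rename_i hii
            have := mu.strict i hi
            rw [← hii]
            omega
          · exact mu.strict i hi
      pos := by
        intro i hi
        by_cases hc : i0 = mu.l
        · rw [if_pos hc] at hi
          split_ifs with h1
          · omega
          · exact mu.pos i (by omega)
        · rw [if_neg hc] at hi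
          split_ifs with h1
          · omega
          · exact mu.pos i hi
      zero := by
        intro i hi
        obtain ⟨hle, -⟩ := h
        by_cases hc : i0 = mu.l
        · rw [if_pos hc] at hi
          rw [if_neg (by omega : ¬ i = i0)]
          exact mu.zero i (by omega)
        · rw [if_neg hc] at hi
          rw [if_neg (by omega : ¬ i = i0)]
          exact mu.zero i hi }
  else mu

lemma addBox_l {mu : SPartition} {i0 : ℕ} (h : CanAdd mu i0) :
    (addBox mu i0).l = if i0 = mu.l then mu.l + 1 else mu.l := by
  rw [addBox, dif_pos h]

lemma addBox_parts {mu : SPartition} {i0 : ℕ} (h : CanAdd mu i0) :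
    (addBox mu i0).parts = fun i => if i = i0 then mu.parts i0 + 1 else mu.parts i := by
  rw [addBox, dif_pos h]

lemma covers_addBox {mu : SPartition} {i0 : ℕ} (h : CanAdd mu i0) :
    Covers mu (addBox mu i0) := by
  have hle := h.1
  constructor
  · intro i
    rw [addBox_parts h]
    dsimp only
    split_ifs with h1
    · rw [h1]; omega
    · exact le_refl _
  · rw [SPartition.size, SPartition.size, addBox_l h, addBox_parts h]
    by_cases hc : i0 = mu.l
    · rw [if_pos hc, Finset.sum_range_succ]
      have h1 : ∀ i ∈ Finset.range mu.l, (if i = i0 then mu.parts i0 + 1 else mu.parts i)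
          = mu.parts i := by
        intro i hi
        rw [Finset.mem_range] at hi
        exact if_neg (by omega)
      rw [Finset.sum_congr rfl h1, if_pos (by omega : mu.l = i0), mu.zero i0 (by omega)]
    · rw [if_neg hc]
      have hi0 : i0 < mu.l := by omega
      have key : ∀ i ∈ Finset.range mu.l, (if i = i0 then mu.parts i0 + 1 else mu.parts i)
          = mu.parts i + (if i = i0 then 1 else 0) := by
        intro i _
        split_ifs with h1
        · rw [h1]
        · omega
      rw [Finset.sum_congr rfl key, Finset.sum_add_distrib,
        Finset.sum_ite_eq' (Finset.range mu.l) i0 (fun _ => 1),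
        if_pos (Finset.mem_range.mpr hi0)]

lemma covers_iff (mu lam : SPartition) :
    Covers mu lam ↔ ∃ i0, CanAdd mu i0 ∧ lam = addBox mu i0 := by
  constructor
  · rintro ⟨hle, hsize⟩
    have hml : mu.l ≤ lam.l := by
      by_contra hc
      push_neg at hc
      have h1 := mu.pos lam.l hc
      have h2 := lam.zero lam.l le_rfl
      have h3 := hle lam.l
      omega
    have hsum_mu : ∑ i ∈ Finset.range lam.l, mu.parts i = mu.size := by
      rw [SPartition.size]
      refine (Finset.sum_subset (Finset.range_subset_range.mpr hml) fun i _ hni => ?_).symm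
      rw [Finset.mem_range] at hni
      exact mu.zero i (by omega)
    have hd : ∑ i ∈ Finset.range lam.l, (lam.parts i - mu.parts i) = 1 := by
      have h1 : ∑ i ∈ Finset.range lam.l, lam.parts i
          = ∑ i ∈ Finset.range lam.l, (mu.parts i + (lam.parts i - mu.parts i)) :=
        Finset.sum_congr rfl fun i _ => by have := hle i; omega
      rw [Finset.sum_add_distrib, hsum_mu] at h1
      have h2 : lam.size = ∑ i ∈ Finset.range lam.l, lam.parts i := rfl
      omega
    have hex : ∃ i0 ∈ Finset.range lam.l, lam.parts i0 - mu.parts i0 ≠ 0 := by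
      by_contra hc
      push_neg at hc
      rw [Finset.sum_eq_zero hc] at hd
      omega
    obtain ⟨i0, hi0mem, hi0⟩ := hex
    have h2 : ∑ i ∈ (Finset.range lam.l).erase i0, (lam.parts i - mu.parts i)
        + (lam.parts i0 - mu.parts i0) = 1 := by
      rw [Finset.sum_erase_add _ _ hi0mem]
      exact hd
    have hS0 : ∀ i ∈ (Finset.range lam.l).erase i0, lam.parts i - mu.parts i = 0 := by
      rw [← Finset.sum_eq_zero_iff]
      omega
    have hparts : ∀ i, lam.parts i = if i = i0 then mu.parts i0 + 1 else mu.parts i := by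
      intro i
      by_cases hii : i = i0
      · rw [if_pos hii, hii]
        have := hle i0
        omega
      · rw [if_neg hii]
        by_cases hir : i ∈ Finset.range lam.l
        · have h3 := hS0 i (Finset.mem_erase.mpr ⟨hii, hir⟩)
          have := hle i
          omega
        · rw [Finset.mem_range] at hir
          rw [lam.zero i (by omega), mu.zero i (by omega)]
    have hi0l : i0 < lam.l := Finset.mem_range.mp hi0mem
    have hlaml : lam.l ≤ mu.l + 1 := by
      by_contra hc
      push_neg at hc
      have p1 := lam.pos mu.l (by omega)
      have p2 := lam.pos (mu.l + 1) (by omega)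
      have q1 := hparts mu.l
      have q2 := hparts (mu.l + 1)
      have z1 := mu.zero mu.l le_rfl
      have z2 := mu.zero (mu.l + 1) (by omega)
      split_ifs at q1 q2 <;> omega
    have hcan : CanAdd mu i0 := by
      refine ⟨by omega, ?_⟩
      by_cases h0 : i0 = 0
      · exact Or.inl h0
      · right
        have hstrict := lam.strict (i0 - 1) (by omega)
        have he : i0 - 1 + 1 = i0 := by omega
        rw [he] at hstrict
        have q1 := hparts i0
        rw [if_pos rfl] at q1
        have q2 := hparts (i0 - 1)
        rw [if_neg (by omega)] at q2
        omega
    have hll : lam.l = if i0 = mu.l then mu.l + 1 else mu.l := by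
      by_cases hc : i0 = mu.l
      · rw [if_pos hc]
        omega
      · rw [if_neg hc]
        rcases Nat.lt_or_ge lam.l (mu.l + 1) with hcc | hcc
        · omega
        · exfalso
          have p1 := lam.pos mu.l (by omega)
          have q1 := hparts mu.l
          rw [if_neg (by omega)] at q1
          have z1 := mu.zero mu.l le_rfl
          omega
    refine ⟨i0, hcan, ?_⟩
    apply SPartition.ext'
    · rw [addBox_l hcan]
      exact hll
    · rw [addBox_parts hcan]
      funext i
      exact hparts i
  · rintro ⟨i0, hcan, rfl⟩
    exact covers_addBox hcan

lemma Pmulti_eq (lam : SPartition) (a : ℕ → ℂ) (n : ℕ) (hln : lam.l ≤ n) :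
    Pmulti lam a n = Cv (((n - lam.l).factorial : ℂ))⁻¹ * Tsum a n lam.l hln lam.parts := by
  rw [Pmulti, dif_pos hln]
  rfl

lemma Tsum_congr (a : ℕ → ℂ) (n : ℕ) {l l' : ℕ} (h : l = l') (hl : l ≤ n) (hl' : l' ≤ n)
    (ν ν' : ℕ → ℕ) (hν : ∀ i, i < l → ν i = ν' i) :
    Tsum a n l hl ν = Tsum a n l' hl' ν' := by
  subst h
  rw [Tsum, Tsum]
  refine Finset.sum_congr rfl fun ω _ => ?_
  congr 1
  refine Finset.prod_congr rfl fun i _ => ?_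
  rw [hν i i.2]

end Partitions

/-- Pieri-type formula: `P_{μ;a} · (p_1 − ∑_j a_{μ_j+1}) = ∑_{λ : μ↗λ} P_{λ;a}`,
as an identity of supersymmetric functions, i.e. in every number `n` of variables. -/
theorem Pmulti_pieri (a : ℕ → ℂ) (ha : a 1 = 0) (mu : SPartition) (n : ℕ) :
    Pmulti mu a n *
        ((∑ i : Fin n, Xv i) - Cv (∑ j ∈ Finset.range mu.l, a (mu.parts j + 1)))
      = ∑ᶠ (lam : SPartition) (_ : Covers mu lam), Pmulti lam a n := by
  classical
  -- reduce the finsum to an explicit finite sum over addable boxes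
  set S : Finset SPartition := ((Finset.range (mu.l + 1)).filter (CanAdd mu)).image (addBox mu)
    with hS
  have hiff : ∀ lam, Covers mu lam ↔ lam ∈ S := by
    intro lam
    rw [covers_iff, hS, Finset.mem_image]
    constructor
    · rintro ⟨i0, hcan, rfl⟩
      exact ⟨i0, Finset.mem_filter.mpr ⟨Finset.mem_range.mpr (by have := hcan.1; omega), hcan⟩,
        rfl⟩
    · rintro ⟨i0, hmem, rfl⟩
      exact ⟨i0, (Finset.mem_filter.mp hmem).2, rfl⟩
  have hRHS : (∑ᶠ (lam : SPartition) (_ : Covers mu lam), Pmulti lam a n)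
      = ∑ i0 ∈ (Finset.range (mu.l + 1)).filter (CanAdd mu), Pmulti (addBox mu i0) a n := by
    have h1 : (∑ᶠ (lam : SPartition) (_ : Covers mu lam), Pmulti lam a n)
        = ∑ᶠ (lam : SPartition) (_ : lam ∈ (S : Set SPartition)), Pmulti lam a n :=
      finsum_congr fun lam => by
        rw [show Covers mu lam = (lam ∈ (S : Set SPartition)) from
          propext ((hiff lam).trans (Finset.mem_coe).symm)]
    rw [h1, finsum_mem_coe_finset]
    refine Finset.sum_image ?_
    intro x hx y hy he
    have hcx : CanAdd mu x := (Finset.mem_filter.mp hx).2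
    have hcy : CanAdd mu y := (Finset.mem_filter.mp hy).2
    by_contra hne
    have e1 : (addBox mu x).parts x = mu.parts x + 1 := by
      rw [addBox_parts hcx]
      exact if_pos rfl
    have e2 : (addBox mu y).parts x = mu.parts x := by
      rw [addBox_parts hcy]
      exact if_neg hne
    rw [he] at e1
    omega
  rw [hRHS]
  rcases le_or_gt mu.l n with hl | hl
  · -- main case
    rw [Finset.sum_filter, Finset.sum_range_succ, Pmulti_eq mu a n hl, mul_assoc,
      key1 a n mu.l hl mu.parts, mul_add, Finset.mul_sum]
    congr 1
    · -- row terms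
      rw [← Fin.sum_univ_eq_sum_range
        (fun i0 => if CanAdd mu i0 then Pmulti (addBox mu i0) a n else 0) mu.l]
      refine Finset.sum_congr rfl fun i _ => ?_
      by_cases hc : CanAdd mu (i : ℕ)
      · rw [if_pos hc]
        have hAl : (addBox mu (i : ℕ)).l = mu.l := by
          rw [addBox_l hc, if_neg (by have := i.2; omega)]
        have hln' : (addBox mu (i : ℕ)).l ≤ n := by rw [hAl]; exact hl
        rw [Pmulti_eq _ a n hln']
        have hfac : n - (addBox mu (i : ℕ)).l = n - mu.l := by rw [hAl]
        rw [hfac]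
        congr 1
        exact Tsum_congr a n hAl.symm hl hln' _ _
          (fun j hj => by rw [addBox_parts hc]; rfl)
      · rw [if_neg hc]
        have hil : (i : ℕ) < mu.l := i.2
        have h0 : (i : ℕ) ≠ 0 := fun h => hc ⟨by omega, Or.inl h⟩
        have hone : ¬(mu.parts (i : ℕ) + 1 < mu.parts ((i : ℕ) - 1)) :=
          fun hlt => hc ⟨by omega, Or.inr hlt⟩
        have hstrict := mu.strict ((i : ℕ) - 1) (by omega)
        have he' : (i : ℕ) - 1 + 1 = (i : ℕ) := by omega
        rw [he'] at hstrict
        have heqv : bump mu.parts (i : ℕ) (((i : ℕ) - 1) + 1) = bump mu.parts (i : ℕ) ((i : ℕ) - 1) := by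
          rw [he']
          show (if (i : ℕ) = (i : ℕ) then mu.parts (i : ℕ) + 1 else mu.parts (i : ℕ))
            = (if (i : ℕ) - 1 = (i : ℕ) then mu.parts (i : ℕ) + 1 else mu.parts ((i : ℕ) - 1))
          rw [if_pos rfl, if_neg (by omega)]
          omega
        rw [Tsum_vanish a n mu.l hl _ ((i : ℕ) - 1) (by omega) heqv, mul_zero]
    · -- the new-row term
      rcases eq_or_lt_of_le hl with heqn | hltn
      · -- n = mu.l : tail empty
        rw [Btail_eq_zero a n mu.l hl (by omega), mul_zero]
        by_cases hc : CanAdd mu mu.l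
        · rw [if_pos hc, Pmulti, dif_neg (by rw [addBox_l hc, if_pos rfl]; omega)]
        · rw [if_neg hc]
      · -- mu.l < n
        have hl1 : mu.l + 1 ≤ n := hltn
        have hb := key3 a ha n mu.l hl1 mu.parts
        rw [show Btail a n mu.l hl mu.parts
            = Btail a n mu.l (Nat.le_of_succ_le hl1) mu.parts from rfl, ← hb]
        have hfc : (((n - mu.l).factorial : ℂ))⁻¹ * ((n - mu.l : ℕ) : ℂ)
            = (((n - (mu.l + 1)).factorial : ℂ))⁻¹ := by
          have h2 : n - (mu.l + 1) = n - mu.l - 1 := by omega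
          have hm0 : ((n - mu.l : ℕ) : ℂ) ≠ 0 := Nat.cast_ne_zero.mpr (by omega)
          have hsplit : (((n - mu.l).factorial : ℂ))
              = ((n - mu.l : ℕ) : ℂ) * (((n - mu.l - 1).factorial : ℂ)) := by
            exact_mod_cast congrArg (Nat.cast (R := ℂ)) (Nat.mul_factorial_pred (by omega)).symm
          rw [h2, hsplit, mul_inv, mul_comm (((n - mu.l : ℕ) : ℂ))⁻¹, mul_assoc,
            inv_mul_cancel₀ hm0, mul_one]
        have hCv : Cv (n := n) (((n - mu.l).factorial : ℂ))⁻¹ * ((n - mu.l : ℕ) : K n)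
            = Cv (((n - (mu.l + 1)).factorial : ℂ))⁻¹ := by
          rw [← Cv_natCast (n := n) (n - mu.l), ← Cv_mul, hfc]
        rw [← mul_assoc, hCv]
        by_cases hc : CanAdd mu mu.l
        · rw [if_pos hc]
          have hAl : (addBox mu mu.l).l = mu.l + 1 := by rw [addBox_l hc, if_pos rfl]
          have hln' : (addBox mu mu.l).l ≤ n := by rw [hAl]; exact hl1
          rw [Pmulti_eq _ a n hln']
          have hfac : n - (addBox mu mu.l).l = n - (mu.l + 1) := by rw [hAl]
          rw [hfac]
          congr 1
          refine Tsum_congr a n hAl.symm hl1 hln' _ _ (fun j hj => ?_)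
          rw [addBox_parts hc]
          show (if j = mu.l then 1 else mu.parts j)
            = (if j = mu.l then mu.parts mu.l + 1 else mu.parts j)
          rw [mu.zero mu.l le_rfl]
        · rw [if_neg hc]
          -- the appended row is not strict: vanishing
          have h0 : mu.l ≠ 0 := fun h => hc ⟨le_refl _, Or.inl h⟩
          have hone : ¬(mu.parts mu.l + 1 < mu.parts (mu.l - 1)) :=
            fun hlt => hc ⟨le_refl _, Or.inr hlt⟩
          have hp := mu.pos (mu.l - 1) (by omega)
          have hz := mu.zero mu.l le_rfl
          have heqv : (fun i => if i = mu.l then 1 else mu.parts i) ((mu.l - 1) + 1)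
              = (fun i => if i = mu.l then 1 else mu.parts i) (mu.l - 1) := by
            have he' : mu.l - 1 + 1 = mu.l := by omega
            rw [he']
            show (if mu.l = mu.l then 1 else mu.parts mu.l)
              = (if mu.l - 1 = mu.l then 1 else mu.parts (mu.l - 1))
            rw [if_pos rfl, if_neg (by omega)]
            omega
          rw [Tsum_vanish a n (mu.l + 1) hl1 _ (mu.l - 1) (by omega) heqv, mul_zero]
  · -- degenerate case : too few variables
    rw [Pmulti, dif_neg (by omega), zero_mul]
    symm
    apply Finset.sum_eq_zero
    intro i0 hi0
    have hcan := (Finset.mem_filter.mp hi0).2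
    rw [Pmulti, dif_neg ?_]
    rw [addBox_l hcan]
    split_ifs <;> omega

end
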